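/- arXiv:2503.15804 — 2 statements merged into one kernel-verified Lean document; each statement's English description precedes it below -/
import Mathlib

section
/- Fix a matrix D̄ ∈ ℝ^{N×n}, an integer τ ≥ 1, and a real α > 0 with ταL ≤ 2. Let Y : ℕ → ℝ^{N×n} satisfy Y(s+1) = Y(s) − α∇F(Y(s)) − αD̄ for all s ≥ 0. Then for every integer s with 0 ≤ s ≤ τ−1: ‖∇F(Y(s)) − ∇F(Y(0))‖ ≤ (αLτ/2)(1 + 2/τ)^{τ−1}·(L‖Y(0) − X*‖ + ‖D̄ − D*‖). -/
open Matrix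
set_option linter.unusedVariables false

noncomputable def Jmat (N : ℕ) : Matrix (Fin N) (Fin N) ℝ :=
  Matrix.of fun _ _ => (N : ℝ)⁻¹

noncomputable def gradF {N n : ℕ}
    (g : Fin N → EuclideanSpace ℝ (Fin n) → EuclideanSpace ℝ (Fin n))
    (X : Matrix (Fin N) (Fin n) ℝ) : Matrix (Fin N) (Fin n) ℝ :=
  Matrix.of fun i => (WithLp.equiv 2 (Fin n → ℝ))
    (g i ((WithLp.equiv 2 (Fin n → ℝ)).symm (X i)))

/-- Squared weighted norm `‖A‖_Q² = tr(AᵀQA)`. -/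
noncomputable def nsqQ {N n : ℕ} (Q : Matrix (Fin N) (Fin N) ℝ)
    (A : Matrix (Fin N) (Fin n) ℝ) : ℝ :=
  Matrix.trace (Aᵀ * Q * A)

/-- Squared Frobenius norm `‖A‖² = tr(AᵀA)`. -/
noncomputable def frobSq {N n : ℕ} (A : Matrix (Fin N) (Fin n) ℝ) : ℝ :=
  Matrix.trace (Aᵀ * A)

/-- Frobenius norm `‖A‖ = √tr(AᵀA)`. -/
noncomputable def fnorm {N n : ℕ} (A : Matrix (Fin N) (Fin n) ℝ) : ℝ :=
  Real.sqrt (Matrix.trace (Aᵀ * A))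


lemma fnorm_eq_sqrt_sum {N n : ℕ} (A : Matrix (Fin N) (Fin n) ℝ) :
    fnorm A = Real.sqrt (∑ i, ∑ j, A i j ^ 2) := by
  unfold fnorm
  congr 1
  rw [Matrix.trace]
  simp only [Matrix.diag_apply, Matrix.mul_apply, Matrix.transpose_apply]
  rw [Finset.sum_comm]
  simp [sq]

noncomputable def toE {N n : ℕ} (A : Matrix (Fin N) (Fin n) ℝ) :
    EuclideanSpace ℝ (Fin N × Fin n) :=
  (WithLp.equiv 2 (Fin N × Fin n → ℝ)).symm (fun p => A p.1 p.2)

lemma fnorm_eq_norm {N n : ℕ} (A : Matrix (Fin N) (Fin n) ℝ) :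
    fnorm A = ‖toE A‖ := by
  rw [fnorm_eq_sqrt_sum, EuclideanSpace.norm_eq]
  congr 1
  rw [show (∑ i : Fin N × Fin n, ‖toE A i‖ ^ 2) = ∑ i : Fin N, ∑ j : Fin n, ‖toE A (i,j)‖ ^ 2
    from Fintype.sum_prod_type _]
  simp [toE, Real.norm_eq_abs, sq_abs]

lemma toE_add {N n : ℕ} (A B : Matrix (Fin N) (Fin n) ℝ) :
    toE (A + B) = toE A + toE B := rfl

lemma toE_smul {N n : ℕ} (c : ℝ) (A : Matrix (Fin N) (Fin n) ℝ) :
    toE (c • A) = c • toE A := rfl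

lemma fnorm_nonneg {N n : ℕ} (A : Matrix (Fin N) (Fin n) ℝ) : 0 ≤ fnorm A :=
  Real.sqrt_nonneg _

lemma fnorm_zero {N n : ℕ} : fnorm (0 : Matrix (Fin N) (Fin n) ℝ) = 0 := by
  simp [fnorm]

lemma fnorm_triangle {N n : ℕ} (A B : Matrix (Fin N) (Fin n) ℝ) :
    fnorm (A + B) ≤ fnorm A + fnorm B := by
  rw [fnorm_eq_norm, fnorm_eq_norm, fnorm_eq_norm, toE_add]
  exact norm_add_le _ _

lemma fnorm_smul {N n : ℕ} (c : ℝ) (A : Matrix (Fin N) (Fin n) ℝ) :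
    fnorm (c • A) = |c| * fnorm A := by
  rw [fnorm_eq_norm, fnorm_eq_norm, toE_smul, norm_smul, Real.norm_eq_abs]

lemma fnorm_grad_lip {N n : ℕ} {L : ℝ} (hL : 0 ≤ L)
    (g : Fin N → EuclideanSpace ℝ (Fin n) → EuclideanSpace ℝ (Fin n))
    (hsmooth : ∀ i x y, ‖g i x - g i y‖ ≤ L * ‖x - y‖)
    (X Y : Matrix (Fin N) (Fin n) ℝ) :
    fnorm (gradF g X - gradF g Y) ≤ L * fnorm (X - Y) := by
  rw [fnorm_eq_sqrt_sum, fnorm_eq_sqrt_sum]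
  rw [show L * Real.sqrt (∑ i, ∑ j, (X - Y) i j ^ 2)
      = Real.sqrt (L ^ 2 * ∑ i, ∑ j, (X - Y) i j ^ 2) by
    rw [Real.sqrt_mul (sq_nonneg L), Real.sqrt_sq hL]]
  apply Real.sqrt_le_sqrt
  rw [Finset.mul_sum]
  apply Finset.sum_le_sum
  intro i _
  have key : ∀ (v : EuclideanSpace ℝ (Fin n)), ∑ j, v j ^ 2 = ‖v‖ ^ 2 := by
    intro v
    rw [EuclideanSpace.norm_eq, Real.sq_sqrt (by positivity)]
    simp [sq_abs]
  have h1 : ∑ j, (gradF g X - gradF g Y) i j ^ 2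
      = ‖g i ((WithLp.equiv 2 (Fin n → ℝ)).symm (X i))
          - g i ((WithLp.equiv 2 (Fin n → ℝ)).symm (Y i))‖ ^ 2 := by
    rw [← key]
    apply Finset.sum_congr rfl
    intro j _
    congr 1
  have h2 : ∑ j, (X - Y) i j ^ 2
      = ‖(WithLp.equiv 2 (Fin n → ℝ)).symm (X i)
          - (WithLp.equiv 2 (Fin n → ℝ)).symm (Y i)‖ ^ 2 := by
    rw [← key]
    apply Finset.sum_congr rfl
    intro j _
    congr 1
  rw [h1, h2, ← mul_pow]
  apply pow_le_pow_left₀ (norm_nonneg _)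
  exact hsmooth i _ _


set_option maxHeartbeats 1000000 in
/-- gradient-drift bound for the within-round iteration
`Y(s+1) = Y(s) − α∇F(Y(s)) − αD̄`, for `0 ≤ s ≤ τ − 1`. -/
theorem within_round_gradient_drift_bound
    {N n : ℕ} (hN : 1 ≤ N) (hn : 1 ≤ n)
    (L μ : ℝ) (hμ : 0 < μ) (hLμ : μ ≤ L)
    (f : Fin N → EuclideanSpace ℝ (Fin n) → ℝ)
    (g : Fin N → EuclideanSpace ℝ (Fin n) → EuclideanSpace ℝ (Fin n))
    (hdiff : ∀ i, Differentiable ℝ (f i))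
    (hgrad : ∀ i x, HasGradientAt (f i) (g i x) x)
    (hsmooth : ∀ i x y, ‖g i x - g i y‖ ≤ L * ‖x - y‖)
    (hsc : ∀ i x y, μ * ‖x - y‖ ^ 2 ≤ (inner ℝ (g i x - g i y) (x - y) : ℝ))
    (xstar : EuclideanSpace ℝ (Fin n))
    (hxstar : ∀ y : EuclideanSpace ℝ (Fin n),
      (N : ℝ)⁻¹ * ∑ i : Fin N, f i xstar ≤ (N : ℝ)⁻¹ * ∑ i : Fin N, f i y)
    (Xstar : Matrix (Fin N) (Fin n) ℝ)
    (hXstar : ∀ i : Fin N, Xstar i = (WithLp.equiv 2 (Fin n → ℝ)) xstar)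
    (Dstar : Matrix (Fin N) (Fin n) ℝ) (hDstar : Dstar = - gradF g Xstar)
    (Dbar : Matrix (Fin N) (Fin n) ℝ)
    (τ : ℕ) (hτ : 1 ≤ τ) (α : ℝ) (hα : 0 < α)
    (hταL : (τ : ℝ) * α * L ≤ 2)
    (Y : ℕ → Matrix (Fin N) (Fin n) ℝ)
    (hY : ∀ s : ℕ, Y (s + 1) = Y s - α • gradF g (Y s) - α • Dbar) :
    ∀ s : ℕ, s ≤ τ - 1 →
      fnorm (gradF g (Y s) - gradF g (Y 0))
      ≤ (α * L * (τ : ℝ) / 2) * (1 + 2 / (τ : ℝ)) ^ (τ - 1)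
          * (L * fnorm (Y 0 - Xstar) + fnorm (Dbar - Dstar)) := by
  have hL : 0 < L := lt_of_lt_of_le hμ hLμ
  have hτR : (0:ℝ) < (τ:ℝ) := by exact_mod_cast Nat.lt_of_lt_of_le Nat.zero_lt_one hτ
  obtain ⟨B, hBdef⟩ : ∃ B : ℝ, B = L * fnorm (Y 0 - Xstar) + fnorm (Dbar - Dstar) := ⟨_, rfl⟩
  have hB0 : 0 ≤ B := by
    have h1 := fnorm_nonneg (Y 0 - Xstar)
    have h2 := fnorm_nonneg (Dbar - Dstar)
    rw [hBdef]
    nlinarith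
  obtain ⟨r, hrdef⟩ : ∃ r : ℝ, r = 1 + 2 / (τ:ℝ) := ⟨_, rfl⟩
  have h2τ : 0 < 2 / (τ:ℝ) := by positivity
  have hr1 : (1:ℝ) ≤ r := by rw [hrdef]; linarith
  have hαL : α * L ≤ 2 / (τ:ℝ) := by
    rw [le_div_iff₀ hτR]
    nlinarith
  have key : ∀ s : ℕ, fnorm (Y s - Y 0) ≤ (α * (τ:ℝ) / 2) * (r ^ s - 1) * B := by
    intro s
    induction s with
    | zero =>
      simp [fnorm_zero]
    | succ s ih =>
      have hdecomp : Y (s + 1) - Y 0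
          = (Y s - Y 0) + (-α) • (gradF g (Y s) - gradF g (Y 0))
            + (-α) • (gradF g (Y 0) - gradF g Xstar) + (-α) • (Dbar - Dstar) := by
        rw [hY s, hDstar]
        module
      have htri : fnorm (Y (s + 1) - Y 0)
          ≤ fnorm (Y s - Y 0) + α * fnorm (gradF g (Y s) - gradF g (Y 0))
            + α * fnorm (gradF g (Y 0) - gradF g Xstar) + α * fnorm (Dbar - Dstar) := by
        rw [hdecomp]
        have habs : |(-α)| = α := by rw [abs_neg, abs_of_pos hα]
        calc fnorm (Y s - Y 0 + (-α) • (gradF g (Y s) - gradF g (Y 0))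
                + (-α) • (gradF g (Y 0) - gradF g Xstar) + (-α) • (Dbar - Dstar))
            ≤ fnorm (Y s - Y 0 + (-α) • (gradF g (Y s) - gradF g (Y 0))
                + (-α) • (gradF g (Y 0) - gradF g Xstar)) + fnorm ((-α) • (Dbar - Dstar)) :=
              fnorm_triangle _ _
          _ ≤ fnorm (Y s - Y 0 + (-α) • (gradF g (Y s) - gradF g (Y 0)))
                + fnorm ((-α) • (gradF g (Y 0) - gradF g Xstar))
                + fnorm ((-α) • (Dbar - Dstar)) := by
              have := fnorm_triangle (Y s - Y 0 + (-α) • (gradF g (Y s) - gradF g (Y 0)))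
                ((-α) • (gradF g (Y 0) - gradF g Xstar))
              linarith
          _ ≤ fnorm (Y s - Y 0) + fnorm ((-α) • (gradF g (Y s) - gradF g (Y 0)))
                + fnorm ((-α) • (gradF g (Y 0) - gradF g Xstar))
                + fnorm ((-α) • (Dbar - Dstar)) := by
              have := fnorm_triangle (Y s - Y 0) ((-α) • (gradF g (Y s) - gradF g (Y 0)))
              linarith
          _ = _ := by rw [fnorm_smul, fnorm_smul, fnorm_smul, habs]
      have hlip1 : fnorm (gradF g (Y s) - gradF g (Y 0)) ≤ L * fnorm (Y s - Y 0) :=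
        fnorm_grad_lip hL.le g hsmooth _ _
      have hlip2 : fnorm (gradF g (Y 0) - gradF g Xstar) ≤ L * fnorm (Y 0 - Xstar) :=
        fnorm_grad_lip hL.le g hsmooth _ _
      have hstep : fnorm (Y (s + 1) - Y 0) ≤ (1 + α * L) * fnorm (Y s - Y 0) + α * B := by
        rw [hBdef]
        nlinarith [fnorm_nonneg (Y s - Y 0)]
      have ha0 : 0 ≤ fnorm (Y s - Y 0) := fnorm_nonneg _
      have hrs : (0:ℝ) ≤ r ^ s - 1 := by
        have : (1:ℝ) ≤ r ^ s := one_le_pow₀ hr1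
        linarith
      have h2 : (1 + α * L) * fnorm (Y s - Y 0) ≤ r * ((α * (τ:ℝ) / 2) * (r ^ s - 1) * B) := by
        have hrr : 1 + α * L ≤ r := by rw [hrdef]; linarith
        calc (1 + α * L) * fnorm (Y s - Y 0) ≤ r * fnorm (Y s - Y 0) := by nlinarith
          _ ≤ r * ((α * (τ:ℝ) / 2) * (r ^ s - 1) * B) := by
              have hr0 : (0:ℝ) ≤ r := by linarith
              exact mul_le_mul_of_nonneg_left ih hr0
      have heq : r * ((α * (τ:ℝ) / 2) * (r ^ s - 1) * B) + α * B
          = (α * (τ:ℝ) / 2) * (r ^ (s + 1) - 1) * B := by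
        rw [pow_succ, hrdef]
        field_simp
        ring
      linarith
  intro s hs
  have hsτ : s ≤ τ - 1 := hs
  have hpow : r ^ s - 1 ≤ r ^ (τ - 1) := by
    have h1 : r ^ s ≤ r ^ (τ - 1) := pow_le_pow_right₀ hr1 hsτ
    linarith
  have hlip : fnorm (gradF g (Y s) - gradF g (Y 0)) ≤ L * fnorm (Y s - Y 0) :=
    fnorm_grad_lip hL.le g hsmooth _ _
  have hk := key s
  have hfin : L * ((α * (τ:ℝ) / 2) * (r ^ s - 1) * B)
      ≤ (α * L * (τ:ℝ) / 2) * r ^ (τ - 1) * B := by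
    have h1 : (α * (τ:ℝ) / 2) * (r ^ s - 1) ≤ (α * (τ:ℝ) / 2) * r ^ (τ - 1) :=
      mul_le_mul_of_nonneg_left hpow (by positivity)
    have h2 : ((α * (τ:ℝ) / 2) * (r ^ s - 1)) * B ≤ ((α * (τ:ℝ) / 2) * r ^ (τ - 1)) * B :=
      mul_le_mul_of_nonneg_right h1 hB0
    nlinarith
  rw [hrdef, hBdef] at hfin hk
  calc fnorm (gradF g (Y s) - gradF g (Y 0)) ≤ L * fnorm (Y s - Y 0) := hlip
    _ ≤ L * ((α * (τ:ℝ) / 2) * ((1 + 2 / (τ:ℝ)) ^ s - 1)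
          * (L * fnorm (Y 0 - Xstar) + fnorm (Dbar - Dstar))) :=
        mul_le_mul_of_nonneg_left hk hL.le
    _ ≤ _ := hfin
end

section
/- Fix a matrix D̄ ∈ ℝ^{N×n}, an integer τ ≥ 1, and a real α > 0 with ταL ≤ 2. Let Y : ℕ → ℝ^{N×n} satisfy Y(s+1) = Y(s) − α∇F(Y(s)) − αD̄ for all s ≥ 0. Then, with A₁ = (τ²/2)(1 + 2/τ)^{2τ−2}, for every integer s with 0 ≤ s ≤ τ−1: ‖∇F(Y(s)) − ∇F(Y(0))‖² ≤ A₁L⁴α²‖Y(0) − X*‖² + A₁L²α²‖D̄ − D*‖². -/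
open Matrix
set_option linter.unusedVariables false

section auxFrob
variable {N n : ℕ}
attribute [local instance] Matrix.frobeniusSeminormedAddCommGroup Matrix.frobeniusNormedSpace

lemma frobSq_eq_sum (A : Matrix (Fin N) (Fin n) ℝ) :
    frobSq A = ∑ i, ∑ j, (A i j) ^ 2 := by
  unfold frobSq
  rw [Matrix.trace]
  simp only [Matrix.diag, Matrix.mul_apply, Matrix.transpose_apply, ← sq]
  exact Finset.sum_comm

lemma frobSq_nonneg (A : Matrix (Fin N) (Fin n) ℝ) : 0 ≤ frobSq A := by
  rw [frobSq_eq_sum]; positivity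

lemma norm_eq_sqrt_frobSq (A : Matrix (Fin N) (Fin n) ℝ) :
    ‖A‖ = Real.sqrt (frobSq A) := by
  rw [Matrix.frobenius_norm_def, frobSq_eq_sum, Real.sqrt_eq_rpow]
  norm_num [Real.norm_eq_abs, sq_abs]

lemma frobSq_eq_norm_sq (A : Matrix (Fin N) (Fin n) ℝ) :
    frobSq A = ‖A‖ ^ 2 := by
  rw [norm_eq_sqrt_frobSq, Real.sq_sqrt (frobSq_nonneg A)]

lemma frobSq_eq_sum_rows (A : Matrix (Fin N) (Fin n) ℝ) :
    frobSq A = ∑ i, ‖(WithLp.equiv 2 (Fin n → ℝ)).symm (A i)‖ ^ 2 := by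
  rw [frobSq_eq_sum]
  refine Finset.sum_congr rfl fun i _ => ?_
  rw [EuclideanSpace.norm_eq, Real.sq_sqrt (by positivity)]
  simp [Real.norm_eq_abs, sq_abs]

lemma gradF_lip_sq {L : ℝ}
    (g : Fin N → EuclideanSpace ℝ (Fin n) → EuclideanSpace ℝ (Fin n))
    (hsmooth : ∀ i x y, ‖g i x - g i y‖ ≤ L * ‖x - y‖)
    (X Z : Matrix (Fin N) (Fin n) ℝ) :
    frobSq (gradF g X - gradF g Z) ≤ L ^ 2 * frobSq (X - Z) := by
  rw [frobSq_eq_sum_rows, frobSq_eq_sum_rows, Finset.mul_sum]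
  refine Finset.sum_le_sum fun i _ => ?_
  have h1 : (WithLp.equiv 2 (Fin n → ℝ)).symm ((gradF g X - gradF g Z) i)
      = g i ((WithLp.equiv 2 (Fin n → ℝ)).symm (X i))
        - g i ((WithLp.equiv 2 (Fin n → ℝ)).symm (Z i)) := rfl
  have h2 : (WithLp.equiv 2 (Fin n → ℝ)).symm ((X - Z) i)
      = (WithLp.equiv 2 (Fin n → ℝ)).symm (X i)
        - (WithLp.equiv 2 (Fin n → ℝ)).symm (Z i) := rfl
  rw [h1, h2, ← mul_pow]
  exact pow_le_pow_left₀ (norm_nonneg _) (hsmooth i _ _) 2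

lemma gradF_lip {L : ℝ} (hL : 0 ≤ L)
    (g : Fin N → EuclideanSpace ℝ (Fin n) → EuclideanSpace ℝ (Fin n))
    (hsmooth : ∀ i x y, ‖g i x - g i y‖ ≤ L * ‖x - y‖)
    (X Z : Matrix (Fin N) (Fin n) ℝ) :
    ‖gradF g X - gradF g Z‖ ≤ L * ‖X - Z‖ := by
  have h := gradF_lip_sq g hsmooth X Z
  rw [frobSq_eq_norm_sq, frobSq_eq_norm_sq, ← mul_pow] at h
  have h' := Real.sqrt_le_sqrt h
  rwa [Real.sqrt_sq (norm_nonneg _), Real.sqrt_sq (by positivity)] at h'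

set_option maxHeartbeats 1000000 in
/-- squared gradient-drift bound for the within-round iteration, with
`A₁ = (τ²/2)(1 + 2/τ)^(2τ−2)`. -/
theorem within_round_gradient_drift_sq_bound
    {N n : ℕ} (hN : 1 ≤ N) (hn : 1 ≤ n)
    (L μ : ℝ) (hμ : 0 < μ) (hLμ : μ ≤ L)
    (f : Fin N → EuclideanSpace ℝ (Fin n) → ℝ)
    (g : Fin N → EuclideanSpace ℝ (Fin n) → EuclideanSpace ℝ (Fin n))
    (hdiff : ∀ i, Differentiable ℝ (f i))
    (hgrad : ∀ i x, HasGradientAt (f i) (g i x) x)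
    (hsmooth : ∀ i x y, ‖g i x - g i y‖ ≤ L * ‖x - y‖)
    (hsc : ∀ i x y, μ * ‖x - y‖ ^ 2 ≤ (inner ℝ (g i x - g i y) (x - y) : ℝ))
    (xstar : EuclideanSpace ℝ (Fin n))
    (hxstar : ∀ y : EuclideanSpace ℝ (Fin n),
      (N : ℝ)⁻¹ * ∑ i : Fin N, f i xstar ≤ (N : ℝ)⁻¹ * ∑ i : Fin N, f i y)
    (Xstar : Matrix (Fin N) (Fin n) ℝ)
    (hXstar : ∀ i : Fin N, Xstar i = (WithLp.equiv 2 (Fin n → ℝ)) xstar)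
    (Dstar : Matrix (Fin N) (Fin n) ℝ) (hDstar : Dstar = - gradF g Xstar)
    (Dbar : Matrix (Fin N) (Fin n) ℝ)
    (τ : ℕ) (hτ : 1 ≤ τ) (α : ℝ) (hα : 0 < α)
    (hταL : (τ : ℝ) * α * L ≤ 2)
    (Y : ℕ → Matrix (Fin N) (Fin n) ℝ)
    (hY : ∀ s : ℕ, Y (s + 1) = Y s - α • gradF g (Y s) - α • Dbar) :
    ∀ s : ℕ, s ≤ τ - 1 →
      frobSq (gradF g (Y s) - gradF g (Y 0))
      ≤ ((τ : ℝ) ^ 2 / 2) * (1 + 2 / (τ : ℝ)) ^ (2 * τ - 2) * L ^ 4 * α ^ 2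
            * frobSq (Y 0 - Xstar)
        + ((τ : ℝ) ^ 2 / 2) * (1 + 2 / (τ : ℝ)) ^ (2 * τ - 2) * L ^ 2 * α ^ 2
            * frobSq (Dbar - Dstar) := by
  intro s hs
  rw [frobSq_eq_norm_sq, frobSq_eq_norm_sq, frobSq_eq_norm_sq]
  have hL : (0:ℝ) < L := lt_of_lt_of_le hμ hLμ
  have hτ0 : (0:ℝ) < (τ:ℝ) := by exact_mod_cast hτ
  set ρ : ℝ := 1 + 2 / (τ:ℝ) with hρdef
  have hτpos : (0:ℝ) < 2 / (τ:ℝ) := by positivity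
  have hρ1 : (1:ℝ) ≤ ρ := by rw [hρdef]; linarith
  have hρ0 : (0:ℝ) < ρ := by linarith
  have hαL : α * L ≤ 2 / (τ:ℝ) := by
    rw [le_div_iff₀ hτ0]; nlinarith
  have hGX : gradF g Xstar = -Dstar := by rw [hDstar, neg_neg]
  set d : ℝ := ‖Dbar - Dstar‖ with hd
  set B : ℝ := ‖Y 0 - Xstar‖ with hB
  have hd0 : 0 ≤ d := norm_nonneg _
  have hB0 : 0 ≤ B := norm_nonneg _
  have hLip : ∀ X Z, ‖gradF g X - gradF g Z‖ ≤ L * ‖X - Z‖ :=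
    gradF_lip hL.le g hsmooth
  have tsm : ∀ (A : Matrix (Fin N) (Fin n) ℝ), ‖α • A‖ = α * ‖A‖ := fun A => by
    rw [norm_smul, Real.norm_eq_abs, abs_of_pos hα]
  have hrec : ∀ k : ℕ, Y (k+1) - Xstar
      = (Y k - Xstar) - α • (gradF g (Y k) - gradF g Xstar) - α • (Dbar - Dstar) := by
    intro k
    rw [hY k, hGX]
    module
  have hstep : ∀ k : ℕ, ‖Y (k+1) - Xstar‖ ≤ (1 + α*L) * ‖Y k - Xstar‖ + α * d := by
    intro k
    rw [hrec k]
    have t1 : ‖α • (gradF g (Y k) - gradF g Xstar)‖ ≤ α * (L * ‖Y k - Xstar‖) := by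
      rw [tsm]
      exact mul_le_mul_of_nonneg_left (hLip _ _) hα.le
    have t2 : ‖α • (Dbar - Dstar)‖ = α * d := tsm _
    have n1 := norm_sub_le ((Y k - Xstar) - α • (gradF g (Y k) - gradF g Xstar))
      (α • (Dbar - Dstar))
    have n2 := norm_sub_le (Y k - Xstar) (α • (gradF g (Y k) - gradF g Xstar))
    have e0 : (0:ℝ) ≤ ‖Y k - Xstar‖ := norm_nonneg _
    linarith
  have hkey : ∀ k : ℕ, L * ‖Y k - Xstar‖ + d ≤ ρ ^ k * (L * B + d) := by
    intro k
    induction k with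
    | zero => simp [hB]
    | succ k ih =>
      have h1 := hstep k
      have hek : (0:ℝ) ≤ ‖Y k - Xstar‖ := norm_nonneg _
      have h2 : L * ‖Y (k+1) - Xstar‖ + d ≤ ρ * (L * ‖Y k - Xstar‖ + d) := by
        have h3 : (1 + α*L) * (L * ‖Y k - Xstar‖ + d) ≤ ρ * (L * ‖Y k - Xstar‖ + d) := by
          apply mul_le_mul_of_nonneg_right _ (by positivity)
          rw [hρdef]; linarith
        linarith [mul_le_mul_of_nonneg_left h1 hL.le, h3]
      calc L * ‖Y (k+1) - Xstar‖ + d ≤ ρ * (L * ‖Y k - Xstar‖ + d) := h2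
        _ ≤ ρ * (ρ ^ k * (L * B + d)) := mul_le_mul_of_nonneg_left ih hρ0.le
        _ = ρ ^ (k+1) * (L * B + d) := by ring
  have hdrift : ∀ m : ℕ,
      ‖Y m - Y 0‖ ≤ α * ∑ k ∈ Finset.range m, (L * ‖Y k - Xstar‖ + d) := by
    intro m
    induction m with
    | zero => simp
    | succ m ih =>
      have heq : Y (m+1) - Y 0 = (Y m - Y 0) - α • (gradF g (Y m) - gradF g Xstar)
          - α • (Dbar - Dstar) := by rw [hY m, hGX]; module
      rw [heq, Finset.sum_range_succ, mul_add]
      have t1 : ‖α • (gradF g (Y m) - gradF g Xstar)‖ ≤ α * (L * ‖Y m - Xstar‖) := by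
        rw [tsm]
        exact mul_le_mul_of_nonneg_left (hLip _ _) hα.le
      have t2 : ‖α • (Dbar - Dstar)‖ = α * d := tsm _
      have n1 := norm_sub_le ((Y m - Y 0) - α • (gradF g (Y m) - gradF g Xstar))
        (α • (Dbar - Dstar))
      have n2 := norm_sub_le (Y m - Y 0) (α • (gradF g (Y m) - gradF g Xstar))
      have : α * (L * ‖Y m - Xstar‖ + d) = α * (L * ‖Y m - Xstar‖) + α * d := by ring
      linarith
  have hρne : ρ ≠ 1 := by rw [hρdef]; intro h; linarith
  have hLBd : 0 ≤ L * B + d := add_nonneg (mul_nonneg hL.le hB0) hd0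
  have hsum : ∑ k ∈ Finset.range s, ρ ^ k ≤ (τ:ℝ)/2 * ρ ^ (τ-1) := by
    rw [geom_sum_eq hρne]
    have hden : ρ - 1 = 2 / (τ:ℝ) := by rw [hρdef]; ring
    rw [hden, div_le_iff₀ hτpos]
    have hpow : ρ ^ s ≤ ρ ^ (τ-1) := pow_le_pow_right₀ hρ1 hs
    have hpow0 : (0:ℝ) ≤ ρ ^ (τ-1) := pow_nonneg hρ0.le _
    have heq : (τ:ℝ)/2 * ρ ^ (τ-1) * (2 / (τ:ℝ)) = ρ ^ (τ-1) := by
      field_simp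
    linarith
  have hsum2 : ∑ k ∈ Finset.range s, (L * ‖Y k - Xstar‖ + d)
      ≤ (L * B + d) * ((τ:ℝ)/2 * ρ ^ (τ-1)) := by
    calc ∑ k ∈ Finset.range s, (L * ‖Y k - Xstar‖ + d)
        ≤ ∑ k ∈ Finset.range s, ρ ^ k * (L * B + d) :=
          Finset.sum_le_sum fun k _ => hkey k
      _ = (∑ k ∈ Finset.range s, ρ ^ k) * (L * B + d) := by
          rw [← Finset.sum_mul]
      _ ≤ (τ:ℝ)/2 * ρ ^ (τ-1) * (L * B + d) :=
          mul_le_mul_of_nonneg_right hsum hLBd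
      _ = (L * B + d) * ((τ:ℝ)/2 * ρ ^ (τ-1)) := by ring
  have hGs : ‖gradF g (Y s) - gradF g (Y 0)‖
      ≤ L * (α * ((L * B + d) * ((τ:ℝ)/2 * ρ ^ (τ-1)))) := by
    calc ‖gradF g (Y s) - gradF g (Y 0)‖ ≤ L * ‖Y s - Y 0‖ := hLip _ _
      _ ≤ L * (α * ∑ k ∈ Finset.range s, (L * ‖Y k - Xstar‖ + d)) :=
          mul_le_mul_of_nonneg_left (hdrift s) hL.le
      _ ≤ L * (α * ((L * B + d) * ((τ:ℝ)/2 * ρ ^ (τ-1)))) := by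
          apply mul_le_mul_of_nonneg_left _ hL.le
          exact mul_le_mul_of_nonneg_left hsum2 hα.le
  have hsq := pow_le_pow_left₀ (norm_nonneg _) hGs 2
  have hexp : (ρ ^ (τ-1)) ^ 2 = ρ ^ (2*τ-2) := by
    rw [← pow_mul]; congr 1; omega
  have h2 : (L * B + d) ^ 2 ≤ 2 * ((L*B) ^ 2 + d ^ 2) := by
    nlinarith [sq_nonneg (L*B - d)]
  have hc : (0:ℝ) ≤ L ^ 2 * α ^ 2 * ((τ:ℝ) ^ 2 / 4) * ρ ^ (2*τ-2) :=
    mul_nonneg (by positivity) (pow_nonneg hρ0.le _)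
  calc ‖gradF g (Y s) - gradF g (Y 0)‖ ^ 2
      ≤ (L * (α * ((L * B + d) * ((τ:ℝ)/2 * ρ ^ (τ-1))))) ^ 2 := hsq
    _ = L ^ 2 * α ^ 2 * ((τ:ℝ) ^ 2 / 4) * ρ ^ (2*τ-2) * (L * B + d) ^ 2 := by
        rw [← hexp]; ring
    _ ≤ L ^ 2 * α ^ 2 * ((τ:ℝ) ^ 2 / 4) * ρ ^ (2*τ-2) * (2 * ((L*B) ^ 2 + d ^ 2)) :=
        mul_le_mul_of_nonneg_left h2 hc
    _ = (τ:ℝ) ^ 2 / 2 * ρ ^ (2*τ-2) * L ^ 4 * α ^ 2 * B ^ 2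
        + (τ:ℝ) ^ 2 / 2 * ρ ^ (2*τ-2) * L ^ 2 * α ^ 2 * d ^ 2 := by ring

end auxFrob
end
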